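/- Let 0 ≤ α < √β < 1 and ε > 0, with weights ϱ_k = (1-α)ε⁻¹(α^{-k} + (1-α²/β)^{-1/2} β^{-k/2}) for k ∈ -ℕ₀. Define g : ℓ_ϱ → ℝ by g(x) = ((1-α)Σ_{k∈-ℕ₀} α^{-k} x_k) / (ε + √((1-β)Σ_{k∈-ℕ₀} β^{-k} x_k²)), where g(x) := 0 if the denominator series diverges. Then g is uniformly bounded by ((1-α)/√(1-β)) · (1-α²/β)^{-1/2}. -/

import Mathlib

open scoped ENNReal

/-- The map `g` from the Adam sequence space to `ℝ` (scalar case, index `k : ℕ`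
corresponding to the nonpositive integer `-k`). If the denominator series diverges,
`g` is defined to be `0`. -/
noncomputable def adamG (α β ε : ℝ) (x : ℕ → ℝ) : ℝ :=
  if (∑' k : ℕ, ENNReal.ofReal ((1 - β) * β ^ k * (x k) ^ 2)) = ∞ then 0
  else ((1 - α) * ∑' k : ℕ, α ^ k * x k) /
    (ε + Real.sqrt (∑' k : ℕ, ENNReal.ofReal ((1 - β) * β ^ k * (x k) ^ 2)).toReal)

/-- Cauchy–Schwarz for `tsum`. -/
lemma abs_tsum_mul_le_sqrt_mul_sqrt (f g : ℕ → ℝ) (hf : Summable fun k => f k ^ 2)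
    (hg : Summable fun k => g k ^ 2) :
    |∑' k, f k * g k| ≤ Real.sqrt (∑' k, f k ^ 2) * Real.sqrt (∑' k, g k ^ 2) := by
  have hs : Summable fun k => |f k * g k| := by
    refine Summable.of_nonneg_of_le (fun k => abs_nonneg _) (fun k => ?_)
      ((hf.add hg).div_const 2)
    rw [abs_mul]
    nlinarith [sq_nonneg (|f k| - |g k|), sq_abs (f k), sq_abs (g k)]
  have h1 : |∑' k, f k * g k| ≤ ∑' k, |f k * g k| := by
    have := norm_tsum_le_tsum_norm (f := fun k => f k * g k)
      (hs.congr fun k => (Real.norm_eq_abs _).symm)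
    simpa only [Real.norm_eq_abs] using this
  refine h1.trans (Summable.tsum_le_of_sum_le hs fun s => ?_)
  calc ∑ k ∈ s, |f k * g k| = ∑ k ∈ s, |f k| * |g k| := by
        simp [abs_mul]
    _ ≤ Real.sqrt (∑ k ∈ s, |f k| ^ 2) * Real.sqrt (∑ k ∈ s, |g k| ^ 2) :=
        Real.sum_mul_le_sqrt_mul_sqrt s _ _
    _ = Real.sqrt (∑ k ∈ s, f k ^ 2) * Real.sqrt (∑ k ∈ s, g k ^ 2) := by
        simp [sq_abs]
    _ ≤ Real.sqrt (∑' k, f k ^ 2) * Real.sqrt (∑' k, g k ^ 2) := by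
        gcongr <;> exact Summable.sum_le_tsum s (fun k _ => sq_nonneg _) ‹_›

/-- `g` is uniformly bounded by `((1-α)/√(1-β)) · (1-α²/β)^{-1/2}` on `ℓ_ϱ`. -/
theorem stmt1_g_bounded (α β ε : ℝ) (hα : 0 ≤ α) (hαβ : α < Real.sqrt β)
    (hβ : Real.sqrt β < 1) (hε : 0 < ε)
    (ϱ : ℕ → ℝ)
    (hϱ : ∀ k : ℕ, ϱ k = (1 - α) * ε⁻¹ * (α ^ k + (1 / Real.sqrt (1 - α ^ 2 / β)) * (Real.sqrt β) ^ k))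
    (x : ℕ → ℝ) (hx : Summable fun k => ϱ k * |x k|) :
    |adamG α β ε x| ≤ (1 - α) / Real.sqrt (1 - β) * (1 / Real.sqrt (1 - α ^ 2 / β)) := by
  have hβ0 : 0 < β := Real.sqrt_pos.mp (lt_of_le_of_lt hα hαβ)
  have hsβ : Real.sqrt β ^ 2 = β := Real.sq_sqrt hβ0.le
  have hβ1 : β < 1 := by nlinarith [Real.sqrt_nonneg β]
  have hα1 : α < 1 := lt_trans hαβ hβ
  have hαβ2 : α ^ 2 < β := by nlinarith
  have hq1 : α ^ 2 / β < 1 := (div_lt_one hβ0).mpr hαβ2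
  have hq0 : 0 ≤ α ^ 2 / β := by positivity
  have h1β : (0:ℝ) < 1 - β := by linarith
  have hs1β : 0 < Real.sqrt (1 - β) := Real.sqrt_pos.mpr h1β
  have hRHS : 0 ≤ (1 - α) / Real.sqrt (1 - β) * (1 / Real.sqrt (1 - α ^ 2 / β)) :=
    mul_nonneg (div_nonneg (by linarith) hs1β.le)
      (div_nonneg zero_le_one (Real.sqrt_nonneg _))
  unfold adamG
  split_ifs with hfin
  · simpa using hRHS
  have hWnn : ∀ k : ℕ, 0 ≤ (1 - β) * β ^ k * x k ^ 2 := fun k =>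
    mul_nonneg (mul_nonneg h1β.le (pow_nonneg hβ0.le _)) (sq_nonneg _)
  -- summability of β^k x_k²
  have hW : Summable fun k : ℕ => (1 - β) * β ^ k * x k ^ 2 := by
    have := ENNReal.summable_toReal hfin
    refine this.congr fun k => ?_
    rw [ENNReal.toReal_ofReal (hWnn k)]
  have hV : Summable fun k : ℕ => β ^ k * x k ^ 2 := by
    have := hW.div_const (1 - β)
    refine this.congr fun k => ?_
    field_simp
  set V : ℝ := ∑' k : ℕ, β ^ k * x k ^ 2 with hVdef
  have hV0 : 0 ≤ V := tsum_nonneg fun k => by positivity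
  have hT : (∑' k : ℕ, ENNReal.ofReal ((1 - β) * β ^ k * (x k) ^ 2)).toReal = (1 - β) * V := by
    rw [ENNReal.tsum_toReal_eq fun k => ENNReal.ofReal_ne_top]
    rw [show (fun k : ℕ => (ENNReal.ofReal ((1 - β) * β ^ k * x k ^ 2)).toReal)
        = fun k : ℕ => (1 - β) * (β ^ k * x k ^ 2) from funext fun k => by
      rw [ENNReal.toReal_ofReal (hWnn k)]; ring]
    exact tsum_mul_left
  rw [hT]
  -- Cauchy–Schwarz
  have hsβ0 : 0 < Real.sqrt β := Real.sqrt_pos.mpr hβ0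
  have hfpt : ∀ k : ℕ, ((α / Real.sqrt β) ^ k) ^ 2 = (α ^ 2 / β) ^ k := fun k => by
    rw [← pow_mul, mul_comm k 2, pow_mul, div_pow, hsβ]
  have hgpt : ∀ k : ℕ, ((Real.sqrt β) ^ k * x k) ^ 2 = β ^ k * x k ^ 2 := fun k => by
    rw [mul_pow, ← pow_mul, mul_comm k 2, pow_mul, hsβ]
  have hfsum : Summable fun k : ℕ => ((α / Real.sqrt β) ^ k) ^ 2 :=
    (summable_geometric_of_lt_one hq0 hq1).congr fun k => (hfpt k).symm
  have hgsum : Summable fun k : ℕ => ((Real.sqrt β) ^ k * x k) ^ 2 :=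
    hV.congr fun k => (hgpt k).symm
  have hCS := abs_tsum_mul_le_sqrt_mul_sqrt _ _ hfsum hgsum
  have hfg : (fun k : ℕ => (α / Real.sqrt β) ^ k * ((Real.sqrt β) ^ k * x k))
      = fun k : ℕ => α ^ k * x k := by
    funext k
    rw [← mul_assoc, div_pow, div_mul_cancel₀ _ (pow_ne_zero _ hsβ0.ne')]
  have hf2 : (∑' k : ℕ, ((α / Real.sqrt β) ^ k) ^ 2) = (1 - α ^ 2 / β)⁻¹ := by
    rw [tsum_congr hfpt]
    exact tsum_geometric_of_lt_one hq0 hq1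
  have hg2 : (∑' k : ℕ, ((Real.sqrt β) ^ k * x k) ^ 2) = V := tsum_congr hgpt
  rw [hfg, hf2, hg2] at hCS
  rw [Real.sqrt_inv] at hCS
  -- final computation
  have hden : 0 < ε + Real.sqrt ((1 - β) * V) := by positivity
  rw [abs_div, abs_of_pos hden, div_le_iff₀ hden]
  have habs : |(1 - α) * ∑' (k : ℕ), α ^ k * x k|
      ≤ (1 - α) * ((Real.sqrt (1 - α ^ 2 / β))⁻¹ * Real.sqrt V) := by
    rw [abs_mul, abs_of_nonneg (by linarith : (0:ℝ) ≤ 1 - α)]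
    exact mul_le_mul_of_nonneg_left hCS (by linarith)
  refine habs.trans ?_
  rw [Real.sqrt_mul h1β.le V]
  have e1 : (1 - α) / Real.sqrt (1 - β) * (1 / Real.sqrt (1 - α ^ 2 / β))
      * (Real.sqrt (1 - β) * Real.sqrt V)
      = (1 - α) * ((Real.sqrt (1 - α ^ 2 / β))⁻¹ * Real.sqrt V)
        * (Real.sqrt (1 - β) / Real.sqrt (1 - β)) := by
    rw [one_div]
    ring
  calc (1 - α) * ((Real.sqrt (1 - α ^ 2 / β))⁻¹ * Real.sqrt V)
      = (1 - α) / Real.sqrt (1 - β) * (1 / Real.sqrt (1 - α ^ 2 / β))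
        * (Real.sqrt (1 - β) * Real.sqrt V) := by
        rw [e1, div_self hs1β.ne', mul_one]
    _ ≤ (1 - α) / Real.sqrt (1 - β) * (1 / Real.sqrt (1 - α ^ 2 / β))
        * (ε + Real.sqrt (1 - β) * Real.sqrt V) :=
        mul_le_mul_of_nonneg_left (by linarith) hRHS
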